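/- (Closed form of the hierarchical proximal step.) Let the coordinates of ℝ^{1+q} consist of a distinguished coordinate 0 together with disjoint nonempty blocks B_M indexed by M in a finite set 𝓜, and let c₁, c₂, c₃ ≥ 0 and z ∈ ℝ^{1+q}. Define s ∈ ℝ^{1+q} as follows: s₀ = z₀; for each block M, first set t_i = sign(z_i)·(|z_i| − c₁)₊ for all i ∈ B_M, and then s_i = (1 − c₂/‖t^{B_M}‖₂)₊ · t_i for i ∈ B_M (with s restricted to B_M equal to 0 when t^{B_M} = 0). Finally set θ̂ = (1 − c₃/‖s‖₂)₊ · s (with θ̂ = 0 when s = 0). Then θ̂ is the unique minimizer over θ ∈ ℝ^{1+q} of F(θ) = (1/2)‖θ − z‖₂² + c₁ Σ_{i ≠ 0} |θ_i| + c₂ Σ_{M∈𝓜} ‖θ^{B_M}‖₂ + c₃ ‖θ‖₂, where θ^{B_M} denotes the restriction of θ to block B_M. -/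

import Mathlib

open scoped BigOperators

/-- Euclidean (ℓ2) norm of a finitely-indexed real vector. -/
noncomputable def euclNorm {α : Type*} [Fintype α] (f : α → ℝ) : ℝ :=
  Real.sqrt (∑ a, f a ^ 2)

section helpers
variable {α : Type*} [Fintype α]

lemma euclNorm_nonneg (f : α → ℝ) : 0 ≤ euclNorm f := Real.sqrt_nonneg _

lemma euclNorm_sq (f : α → ℝ) : euclNorm f ^ 2 = ∑ a, f a ^ 2 :=
  Real.sq_sqrt (Finset.sum_nonneg fun _ _ => sq_nonneg _)

lemma euclNorm_smul (k : ℝ) (hk : 0 ≤ k) (f : α → ℝ) :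
    euclNorm (fun a => k * f a) = k * euclNorm f := by
  unfold euclNorm
  rw [show (∑ a, (k * f a) ^ 2) = k ^ 2 * ∑ a, f a ^ 2 by
    rw [Finset.mul_sum]; exact Finset.sum_congr rfl fun a _ => by ring,
    Real.sqrt_mul (by positivity), Real.sqrt_sq hk]

lemma euclNorm_inner_le (f g : α → ℝ) : ∑ a, f a * g a ≤ euclNorm f * euclNorm g :=
  Real.sum_mul_le_sqrt_mul_sqrt _ _ _

lemma subgrad_key (c : ℝ) (g xh x : α → ℝ) (hg : euclNorm g ≤ c)
    (hgx : ∑ a, g a * xh a = c * euclNorm xh) :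
    ∑ a, g a * (x a - xh a) ≤ c * euclNorm x - c * euclNorm xh := by
  have h1 : ∑ a, g a * x a ≤ c * euclNorm x :=
    (euclNorm_inner_le g x).trans (mul_le_mul_of_nonneg_right hg (euclNorm_nonneg _))
  have h2 : ∑ a, g a * (x a - xh a) = (∑ a, g a * x a) - ∑ a, g a * xh a := by
    rw [← Finset.sum_sub_distrib]
    exact Finset.sum_congr rfl fun a _ => by ring
  rw [h2, hgx]; linarith

lemma beta_mem (c n : ℝ) (hc : 0 ≤ c) (hn : 0 ≤ n) :
    0 ≤ max (1 - c / n) 0 ∧ max (1 - c / n) 0 ≤ 1 :=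
  ⟨le_max_right _ _, max_le (by have : 0 ≤ c / n := div_nonneg hc hn; linarith) zero_le_one⟩

lemma shrink_norm_le (c : ℝ) (hc : 0 ≤ c) (x : α → ℝ) :
    euclNorm (fun a => x a - max (1 - c / euclNorm x) 0 * x a) ≤ c := by
  set n := euclNorm x with hn
  set β := max (1 - c / n) 0 with hβ
  obtain ⟨hβ0, hβ1⟩ := beta_mem c n hc (euclNorm_nonneg x)
  have he : euclNorm (fun a => x a - β * x a) = (1 - β) * n := by
    have : (fun a => x a - β * x a) = fun a => (1 - β) * x a := by funext a; ring
    rw [this, euclNorm_smul _ (by linarith)]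
  rw [he]
  rcases le_or_gt n 0 with h | h
  · have : n = 0 := le_antisymm h (euclNorm_nonneg x)
    simp [this, hc]
  · rcases le_or_gt (1 - c / n) 0 with h2 | h2
    · have : β = 0 := max_eq_right h2
      rw [this]
      have hnc : n ≤ c := by
        rw [sub_nonpos, le_div_iff₀ h] at h2
        linarith
      linarith
    · have : β = 1 - c / n := max_eq_left h2.le
      rw [this]
      field_simp
      linarith

lemma shrink_inner (c : ℝ) (hc : 0 ≤ c) (x : α → ℝ) (k : ℝ) (hk : 0 ≤ k) :
    ∑ a, (x a - max (1 - c / euclNorm x) 0 * x a) * (k * (max (1 - c / euclNorm x) 0 * x a))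
      = c * euclNorm (fun a => k * (max (1 - c / euclNorm x) 0 * x a)) := by
  set n := euclNorm x with hn
  set β := max (1 - c / n) 0 with hβ
  obtain ⟨hβ0, hβ1⟩ := beta_mem c n hc (euclNorm_nonneg x)
  have hrhs : euclNorm (fun a => k * (β * x a)) = k * β * n := by
    have : (fun a => k * (β * x a)) = fun a => (k * β) * x a := by funext a; ring
    rw [this, euclNorm_smul _ (by positivity)]
  have hlhs : ∑ a, (x a - β * x a) * (k * (β * x a)) = (1 - β) * k * β * n ^ 2 := by
    rw [show (1 - β) * k * β * n ^ 2 = (1 - β) * k * β * ∑ a, x a ^ 2 by rw [hn, euclNorm_sq],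
      Finset.mul_sum]
    exact Finset.sum_congr rfl fun a _ => by ring
  rw [hlhs, hrhs]
  rcases le_or_gt n 0 with h | h
  · have hn0 : n = 0 := le_antisymm h (euclNorm_nonneg x)
    simp [hn0]
  · rcases le_or_gt (1 - c / n) 0 with h2 | h2
    · have : β = 0 := max_eq_right h2
      simp [this]
    · have hb : β = 1 - c / n := max_eq_left h2.le
      have : 1 - β = c / n := by rw [hb]; ring
      rw [this]
      field_simp

lemma soft_abs_le (c zi : ℝ) (hc : 0 ≤ c) :
    |zi - Real.sign zi * max (|zi| - c) 0| ≤ c := by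
  rcases le_or_gt (|zi| - c) 0 with h | h
  · rw [max_eq_right h]
    simpa using abs_le.mpr ⟨by linarith [neg_abs_le zi], by linarith [le_abs_self zi]⟩
  · rw [max_eq_left h.le]
    have hz : zi ≠ 0 := fun h0 => by simp [h0] at h; linarith
    rcases lt_or_gt_of_ne hz with hneg | hpos
    · rw [Real.sign_of_neg hneg, abs_of_neg hneg]
      rw [abs_le]; constructor <;> nlinarith
    · rw [Real.sign_of_pos hpos, abs_of_pos hpos]
      rw [abs_le]; constructor <;> nlinarith

lemma soft_inner (c zi k : ℝ) (hc : 0 ≤ c) (hk : 0 ≤ k) :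
    (zi - Real.sign zi * max (|zi| - c) 0) * (k * (Real.sign zi * max (|zi| - c) 0))
      = c * |k * (Real.sign zi * max (|zi| - c) 0)| := by
  rcases le_or_gt (|zi| - c) 0 with h | h
  · rw [max_eq_right h]; simp
  · rw [max_eq_left h.le]
    have hz : zi ≠ 0 := fun h0 => by simp [h0] at h; linarith
    rcases lt_or_gt_of_ne hz with hneg | hpos
    · rw [abs_of_neg hneg] at h ⊢
      rw [Real.sign_of_neg hneg]
      rw [abs_of_nonpos (by nlinarith [mul_nonneg hk h.le])]
      ring
    · rw [abs_of_pos hpos] at h ⊢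
      rw [Real.sign_of_pos hpos]
      rw [abs_of_nonneg (by nlinarith [mul_nonneg hk h.le])]
      ring

lemma subgrad_abs (c u xh x : ℝ) (hu : |u| ≤ c) (heq : u * xh = c * |xh|) :
    u * (x - xh) ≤ c * |x| - c * |xh| := by
  have h1 : u * x ≤ c * |x| := by
    calc u * x ≤ |u * x| := le_abs_self _
    _ = |u| * |x| := abs_mul u x
    _ ≤ c * |x| := mul_le_mul_of_nonneg_right hu (abs_nonneg x)
  nlinarith [heq]

end helpers

/-- **Closed form of the hierarchical proximal step.**
The coordinates of `ℝ^{1+q}` consist of a distinguished coordinate (`none`)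
and disjoint nonempty blocks `B M`, `M ∈ 𝓜`.  Given `c₁, c₂, c₃ ≥ 0` and `z`,
define `s` by `s₀ = z₀` and, on each block `M`, first soft-threshold
`t_i = sign(z_i)·(|z_i| − c₁)₊` and then group-shrink
`s_i = (1 − c₂/‖t^{B_M}‖₂)₊ · t_i` (so `s ≡ 0` on `B_M` when `t^{B_M} = 0`);
finally `θ̂ = (1 − c₃/‖s‖₂)₊ · s` (with `θ̂ = 0` when `s = 0`; Lean's
convention `x/0 = 0` makes the formulas give exactly these values).
Then `θ̂` is the unique minimizer over `θ ∈ ℝ^{1+q}` of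
`F(θ) = (1/2)‖θ − z‖₂² + c₁ Σ_{i≠0} |θ_i| + c₂ Σ_M ‖θ^{B_M}‖₂ + c₃‖θ‖₂`. -/
theorem hier_prox_closed_form {𝓜 : Type*} [Fintype 𝓜] (B : 𝓜 → Type*)
    [∀ M, Fintype (B M)] [∀ M, Nonempty (B M)]
    (c₁ c₂ c₃ : ℝ) (hc₁ : 0 ≤ c₁) (hc₂ : 0 ≤ c₂) (hc₃ : 0 ≤ c₃)
    (z t s θhat : Option ((M : 𝓜) × B M) → ℝ)
    (ht : ∀ (M : 𝓜) (b : B M),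
      t (some ⟨M, b⟩) = Real.sign (z (some ⟨M, b⟩)) * max (|z (some ⟨M, b⟩)| - c₁) 0)
    (hs0 : s none = z none)
    (hs : ∀ (M : 𝓜) (b : B M),
      s (some ⟨M, b⟩) =
        max (1 - c₂ / euclNorm (fun b' : B M => t (some ⟨M, b'⟩))) 0 * t (some ⟨M, b⟩))
    (hθhat : θhat = fun i => max (1 - c₃ / euclNorm s) 0 * s i) :
    ∀ θ : Option ((M : 𝓜) × B M) → ℝ, θ ≠ θhat →
      (1 / 2) * (∑ i, (θhat i - z i) ^ 2)
          + c₁ * (∑ M : 𝓜, ∑ b : B M, |θhat (some ⟨M, b⟩)|)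
          + c₂ * (∑ M : 𝓜, euclNorm (fun b : B M => θhat (some ⟨M, b⟩)))
          + c₃ * euclNorm θhat
        < (1 / 2) * (∑ i, (θ i - z i) ^ 2)
          + c₁ * (∑ M : 𝓜, ∑ b : B M, |θ (some ⟨M, b⟩)|)
          + c₂ * (∑ M : 𝓜, euclNorm (fun b : B M => θ (some ⟨M, b⟩)))
          + c₃ * euclNorm θ := by
  intro θ hθ
  set γ : ℝ := max (1 - c₃ / euclNorm s) 0 with hγ
  have hγ0 : 0 ≤ γ := le_max_right _ _
  have hθh : ∀ i, θhat i = γ * s i := fun i => by rw [hθhat]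
  -- (C) global shrinkage subgradient inequality
  have hC : ∑ i, (s i - θhat i) * (θ i - θhat i)
      ≤ c₃ * euclNorm θ - c₃ * euclNorm θhat := by
    apply subgrad_key
    · have : (fun i => s i - θhat i) = fun i => s i - γ * s i := by
        funext i; rw [hθh i]
      rw [this]
      exact shrink_norm_le c₃ hc₃ s
    · have h := shrink_inner c₃ hc₃ s 1 zero_le_one
      simp only [one_mul] at h
      calc ∑ i, (s i - θhat i) * θhat i
          = ∑ i, (s i - γ * s i) * (γ * s i) := by
            exact Finset.sum_congr rfl fun i _ => by rw [hθh i]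
        _ = c₃ * euclNorm (fun i => γ * s i) := h
        _ = c₃ * euclNorm θhat := by
            congr 1; exact congrArg euclNorm (funext fun i => (hθh i).symm)
  -- (B) blockwise shrinkage subgradient inequality
  have hB : ∀ M : 𝓜,
      ∑ b : B M, (t (some ⟨M, b⟩) - s (some ⟨M, b⟩)) * (θ (some ⟨M, b⟩) - θhat (some ⟨M, b⟩))
        ≤ c₂ * euclNorm (fun b : B M => θ (some ⟨M, b⟩))
          - c₂ * euclNorm (fun b : B M => θhat (some ⟨M, b⟩)) := by
    intro M
    set x : B M → ℝ := fun b => t (some ⟨M, b⟩) with hx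
    set β : ℝ := max (1 - c₂ / euclNorm x) 0 with hβ
    have hsb : ∀ b : B M, s (some ⟨M, b⟩) = β * x b := fun b => hs M b
    have hθb : ∀ b : B M, θhat (some ⟨M, b⟩) = γ * (β * x b) := fun b => by
      rw [hθh, hsb]
    apply subgrad_key
    · have : (fun b : B M => t (some ⟨M, b⟩) - s (some ⟨M, b⟩))
          = fun b => x b - β * x b := by funext b; rw [hsb]
      rw [this]
      exact shrink_norm_le c₂ hc₂ x
    · have h := shrink_inner c₂ hc₂ x γ hγ0
      calc ∑ b : B M, (t (some ⟨M, b⟩) - s (some ⟨M, b⟩)) * θhat (some ⟨M, b⟩)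
          = ∑ b : B M, (x b - β * x b) * (γ * (β * x b)) := by
            exact Finset.sum_congr rfl fun b _ => by rw [hsb, hθb]
        _ = c₂ * euclNorm (fun b => γ * (β * x b)) := h
        _ = c₂ * euclNorm (fun b : B M => θhat (some ⟨M, b⟩)) := by
            congr 1; exact congrArg euclNorm (funext fun b => (hθb b).symm)
  -- (A) soft-thresholding subgradient inequality (coordinatewise)
  have hA : ∀ (M : 𝓜) (b : B M),
      (z (some ⟨M, b⟩) - t (some ⟨M, b⟩)) * (θ (some ⟨M, b⟩) - θhat (some ⟨M, b⟩))
        ≤ c₁ * |θ (some ⟨M, b⟩)| - c₁ * |θhat (some ⟨M, b⟩)| := by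
    intro M b
    set βM : ℝ := max (1 - c₂ / euclNorm (fun b' : B M => t (some ⟨M, b'⟩))) 0 with hβM
    have hβM0 : 0 ≤ βM := le_max_right _ _
    have hk0 : 0 ≤ γ * βM := mul_nonneg hγ0 hβM0
    have hth : θhat (some ⟨M, b⟩) = (γ * βM) * t (some ⟨M, b⟩) := by
      rw [hθh, hs M b]; ring
    apply subgrad_abs
    · rw [ht M b]
      exact soft_abs_le c₁ (z (some ⟨M, b⟩)) hc₁
    · rw [hth, ht M b]
      have := soft_inner c₁ (z (some ⟨M, b⟩)) (γ * βM) hc₁ hk0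
      calc (z (some ⟨M, b⟩) - Real.sign (z (some ⟨M, b⟩)) * max (|z (some ⟨M, b⟩)| - c₁) 0)
            * (γ * βM * (Real.sign (z (some ⟨M, b⟩)) * max (|z (some ⟨M, b⟩)| - c₁) 0))
          = c₁ * |γ * βM * (Real.sign (z (some ⟨M, b⟩)) * max (|z (some ⟨M, b⟩)| - c₁) 0)| := this
        _ = c₁ * |γ * βM * (Real.sign (z (some ⟨M, b⟩)) * max (|z (some ⟨M, b⟩)| - c₁) 0)| := rfl
  -- sum over Option of sigma type
  have hopt : ∀ f : Option ((M : 𝓜) × B M) → ℝ,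
      ∑ i, f i = f none + ∑ M : 𝓜, ∑ b : B M, f (some ⟨M, b⟩) := by
    intro f
    rw [Fintype.sum_option]
    rw [← Finset.univ_sigma_univ, Finset.sum_sigma]
  -- decomposition of the residual inner product
  have decomp : ∑ i, (z i - θhat i) * (θ i - θhat i)
      = (∑ i, (s i - θhat i) * (θ i - θhat i))
        + (∑ M : 𝓜, ∑ b : B M,
            (z (some ⟨M, b⟩) - t (some ⟨M, b⟩)) * (θ (some ⟨M, b⟩) - θhat (some ⟨M, b⟩)))
        + (∑ M : 𝓜, ∑ b : B M,
            (t (some ⟨M, b⟩) - s (some ⟨M, b⟩)) * (θ (some ⟨M, b⟩) - θhat (some ⟨M, b⟩))) := by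
    rw [hopt (fun i => (z i - θhat i) * (θ i - θhat i)),
      hopt (fun i => (s i - θhat i) * (θ i - θhat i)), hs0]
    have key : ∀ (M : 𝓜) (b : B M),
        (z (some ⟨M, b⟩) - θhat (some ⟨M, b⟩)) * (θ (some ⟨M, b⟩) - θhat (some ⟨M, b⟩))
          = (s (some ⟨M, b⟩) - θhat (some ⟨M, b⟩)) * (θ (some ⟨M, b⟩) - θhat (some ⟨M, b⟩))
            + (z (some ⟨M, b⟩) - t (some ⟨M, b⟩)) * (θ (some ⟨M, b⟩) - θhat (some ⟨M, b⟩))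
            + (t (some ⟨M, b⟩) - s (some ⟨M, b⟩)) * (θ (some ⟨M, b⟩) - θhat (some ⟨M, b⟩)) := by
      intro M b; ring
    have : ∑ M : 𝓜, ∑ b : B M,
        (z (some ⟨M, b⟩) - θhat (some ⟨M, b⟩)) * (θ (some ⟨M, b⟩) - θhat (some ⟨M, b⟩))
      = (∑ M : 𝓜, ∑ b : B M,
          (s (some ⟨M, b⟩) - θhat (some ⟨M, b⟩)) * (θ (some ⟨M, b⟩) - θhat (some ⟨M, b⟩)))
        + (∑ M : 𝓜, ∑ b : B M,
            (z (some ⟨M, b⟩) - t (some ⟨M, b⟩)) * (θ (some ⟨M, b⟩) - θhat (some ⟨M, b⟩)))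
        + (∑ M : 𝓜, ∑ b : B M,
            (t (some ⟨M, b⟩) - s (some ⟨M, b⟩)) * (θ (some ⟨M, b⟩) - θhat (some ⟨M, b⟩))) := by
      simp only [key, Finset.sum_add_distrib]
    rw [this]; ring
  -- summed subgradient inequalities
  have hAsum : ∑ M : 𝓜, ∑ b : B M,
      (z (some ⟨M, b⟩) - t (some ⟨M, b⟩)) * (θ (some ⟨M, b⟩) - θhat (some ⟨M, b⟩))
      ≤ c₁ * (∑ M : 𝓜, ∑ b : B M, |θ (some ⟨M, b⟩)|)
        - c₁ * (∑ M : 𝓜, ∑ b : B M, |θhat (some ⟨M, b⟩)|) := by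
    rw [Finset.mul_sum, Finset.mul_sum, ← Finset.sum_sub_distrib]
    apply Finset.sum_le_sum
    intro M _
    rw [Finset.mul_sum, Finset.mul_sum, ← Finset.sum_sub_distrib]
    exact Finset.sum_le_sum fun b _ => hA M b
  have hBsum : ∑ M : 𝓜, ∑ b : B M,
      (t (some ⟨M, b⟩) - s (some ⟨M, b⟩)) * (θ (some ⟨M, b⟩) - θhat (some ⟨M, b⟩))
      ≤ c₂ * (∑ M : 𝓜, euclNorm (fun b : B M => θ (some ⟨M, b⟩)))
        - c₂ * (∑ M : 𝓜, euclNorm (fun b : B M => θhat (some ⟨M, b⟩))) := by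
    rw [Finset.mul_sum, Finset.mul_sum, ← Finset.sum_sub_distrib]
    exact Finset.sum_le_sum fun M _ => hB M
  have main : ∑ i, (z i - θhat i) * (θ i - θhat i)
      ≤ (c₁ * (∑ M : 𝓜, ∑ b : B M, |θ (some ⟨M, b⟩)|)
          + c₂ * (∑ M : 𝓜, euclNorm (fun b : B M => θ (some ⟨M, b⟩)))
          + c₃ * euclNorm θ)
        - (c₁ * (∑ M : 𝓜, ∑ b : B M, |θhat (some ⟨M, b⟩)|)
          + c₂ * (∑ M : 𝓜, euclNorm (fun b : B M => θhat (some ⟨M, b⟩)))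
          + c₃ * euclNorm θhat) := by
    rw [decomp]; linarith
  -- quadratic expansion
  have hquad : ∑ i, (θ i - z i) ^ 2
      = (∑ i, (θhat i - z i) ^ 2) + (∑ i, (θ i - θhat i) ^ 2)
        - 2 * ∑ i, (z i - θhat i) * (θ i - θhat i) := by
    have key : ∀ i, (θ i - z i) ^ 2
        = (θhat i - z i) ^ 2 + (θ i - θhat i) ^ 2
          - 2 * ((z i - θhat i) * (θ i - θhat i)) := fun i => by ring
    simp only [key, Finset.sum_sub_distrib, Finset.sum_add_distrib, ← Finset.mul_sum]
  -- strict positivity of the gap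
  have hD : 0 < ∑ i, (θ i - θhat i) ^ 2 := by
    have hj : ∃ j, θ j ≠ θhat j := by
      by_contra h
      push_neg at h
      exact hθ (funext h)
    obtain ⟨j, hj⟩ := hj
    apply Finset.sum_pos' (fun i _ => sq_nonneg _)
    exact ⟨j, Finset.mem_univ j, sq_pos_of_ne_zero (sub_ne_zero.mpr hj)⟩
  linarith
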